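/- (Regeneration for Types I, II and III.) Let k ≥ 2 and d ≥ 2k-2 with α = d-k+1, and let n ≥ d+1. Let x_1, ..., x_n be nonzero elements of a finite field F_q with x_i^α ≠ x_j^α for i ≠ j, and for each i let ρ_i = (1, x_i, ..., x_i^{d-1}) and φ_i = (1, x_i, ..., x_i^{α-1}). Let M and M' be d×α matrices of the form [W1; [T2, O]] and [W1'; [T2', O]] respectively, where W1, W1' are symmetric α×α matrices, T2, T2' are symmetric (k-1)×(k-1) matrices, and O is the (k-1)×(α-k+1) zero matrix. Let f ∈ {1, ..., n} and let h_1, ..., h_d be d distinct indices in {1, ..., n}\{f}. If the repair downloads coincide, i.e., ρ_{h_p} M φ_f^t = ρ_{h_p} M' φ_f^t for every p = 1, ..., d, then the shares of node f coincide: ρ_f M = ρ_f M'. Equivalently, a failed node connecting to any d helper nodes can regenerate exactly the share it stored prior to failure from the d downloaded symbols d_{f,h_p} = c_{h_p} φ_f^t. -/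

import Mathlib

open Matrix

lemma sum_dite_castLE {M : Type*} [AddCommMonoid M] {a b : ℕ} (h : a ≤ b) (g : Fin a → M) :
    (∑ j : Fin b, if hj : (j : ℕ) < a then g ⟨j, hj⟩ else 0) = ∑ t : Fin a, g t := by
  rw [← (Finset.sum_subset (Finset.subset_univ
      ((Finset.univ : Finset (Fin a)).map (Fin.castLEEmb h))) ?_), Finset.sum_map]
  · apply Finset.sum_congr rfl
    intro t _
    simp [Fin.castLEEmb, Fin.castLE, t.isLt]
  · intro j _ hj
    rw [dif_neg]
    intro hja
    exact hj (Finset.mem_map.mpr ⟨⟨j, hja⟩, Finset.mem_univ _, rfl⟩)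

theorem regeneration_typeI_II_III {F : Type*} [Field F] [Fintype F]
    (k d n : ℕ) (hk : 2 ≤ k) (hd : 2 * k - 2 ≤ d) (hn : d + 1 ≤ n)
    (x : Fin n → F) (hx0 : ∀ i, x i ≠ 0)
    (hx : ∀ i j : Fin n, i ≠ j → x i ^ (d - k + 1) ≠ x j ^ (d - k + 1))
    (W1 W1' : Matrix (Fin (d - k + 1)) (Fin (d - k + 1)) F)
    (hW1 : W1.IsSymm) (hW1' : W1'.IsSymm)
    (T2 T2' : Matrix (Fin (k - 1)) (Fin (k - 1)) F)
    (hT2 : T2.IsSymm) (hT2' : T2'.IsSymm)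
    (W2 W2' : Matrix (Fin (k - 1)) (Fin (d - k + 1)) F)
    (hW2 : ∀ (i : Fin (k - 1)) (j : Fin (d - k + 1)),
      W2 i j = if h : (j : ℕ) < k - 1 then T2 i ⟨j, h⟩ else 0)
    (hW2' : ∀ (i : Fin (k - 1)) (j : Fin (d - k + 1)),
      W2' i j = if h : (j : ℕ) < k - 1 then T2' i ⟨j, h⟩ else 0)
    (f : Fin n) (hidx : Fin d → Fin n) (hinj : Function.Injective hidx)
    (hne : ∀ p : Fin d, hidx p ≠ f)
    (hdl : ∀ p : Fin d,
      ((Sum.elim (fun t : Fin (d - k + 1) => x (hidx p) ^ (t : ℕ))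
          (fun t : Fin (k - 1) => x (hidx p) ^ (d - k + 1 + (t : ℕ)))) ᵥ*
          Matrix.fromRows W1 W2) ⬝ᵥ (fun t : Fin (d - k + 1) => x f ^ (t : ℕ)) =
      ((Sum.elim (fun t : Fin (d - k + 1) => x (hidx p) ^ (t : ℕ))
          (fun t : Fin (k - 1) => x (hidx p) ^ (d - k + 1 + (t : ℕ)))) ᵥ*
          Matrix.fromRows W1' W2') ⬝ᵥ (fun t : Fin (d - k + 1) => x f ^ (t : ℕ))) :
    (Sum.elim (fun t : Fin (d - k + 1) => x f ^ (t : ℕ))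
        (fun t : Fin (k - 1) => x f ^ (d - k + 1 + (t : ℕ)))) ᵥ*
      Matrix.fromRows W1 W2 =
    (Sum.elim (fun t : Fin (d - k + 1) => x f ^ (t : ℕ))
        (fun t : Fin (k - 1) => x f ^ (d - k + 1 + (t : ℕ)))) ᵥ*
      Matrix.fromRows W1' W2' := by
  have hkd : k - 1 ≤ d - k + 1 := by omega
  have hsum : (d - k + 1) + (k - 1) = d := by omega
  set φf : Fin (d - k + 1) → F := fun t => x f ^ (t : ℕ) with hφf
  set w : Fin (d - k + 1) ⊕ Fin (k - 1) → F :=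
    fun s => (Matrix.fromRows W1 W2 *ᵥ φf) s - (Matrix.fromRows W1' W2' *ᵥ φf) s with hw
  have hxinj : Function.Injective (fun p : Fin d => x (hidx p)) := by
    intro p q hpq
    simp only at hpq
    by_contra hpq'
    exact hx _ _ (fun h => hpq' (hinj h)) (by rw [hpq])
  have hdet : IsUnit (Matrix.vandermonde (fun p : Fin d => x (hidx p))) := by
    rw [Matrix.isUnit_iff_isUnit_det, isUnit_iff_ne_zero]
    exact (Matrix.det_vandermonde_ne_zero_iff).mpr hxinj
  let e : Fin (d - k + 1) ⊕ Fin (k - 1) ≃ Fin d := finSumFinEquiv.trans (finCongr hsum)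
  have hy : ∀ s : Fin (d - k + 1) ⊕ Fin (k - 1), w s = 0 := by
    have hy0 : (fun m : Fin d => w (e.symm m)) = 0 := by
      apply Matrix.mulVec_injective_iff_isUnit.mpr hdet
      rw [Matrix.mulVec_zero]
      funext p
      simp only [Pi.zero_apply]
      have key : (Matrix.vandermonde (fun p : Fin d => x (hidx p)) *ᵥ
          fun m : Fin d => w (e.symm m)) p =
          (Sum.elim (fun t : Fin (d - k + 1) => x (hidx p) ^ (t : ℕ))
            (fun t : Fin (k - 1) => x (hidx p) ^ (d - k + 1 + (t : ℕ)))) ⬝ᵥ w := by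
        simp only [Matrix.mulVec, dotProduct, Matrix.vandermonde_apply]
        rw [(Fintype.sum_equiv e
          (fun s => x (hidx p) ^ ((e s : Fin d) : ℕ) * w (e.symm (e s)))
          (fun m => x (hidx p) ^ (m : ℕ) * w (e.symm m)) (fun s => rfl)).symm]
        apply Finset.sum_congr rfl
        rintro (t | t) _ <;>
          simp [e, finCongr_apply, Equiv.symm_apply_apply]
      rw [key]
      have step : (Sum.elim (fun t : Fin (d - k + 1) => x (hidx p) ^ (t : ℕ))
            (fun t : Fin (k - 1) => x (hidx p) ^ (d - k + 1 + (t : ℕ)))) ⬝ᵥ w =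
          (Sum.elim (fun t : Fin (d - k + 1) => x (hidx p) ^ (t : ℕ))
            (fun t : Fin (k - 1) => x (hidx p) ^ (d - k + 1 + (t : ℕ)))) ⬝ᵥ
            (Matrix.fromRows W1 W2 *ᵥ φf) -
          (Sum.elim (fun t : Fin (d - k + 1) => x (hidx p) ^ (t : ℕ))
            (fun t : Fin (k - 1) => x (hidx p) ^ (d - k + 1 + (t : ℕ)))) ⬝ᵥ
            (Matrix.fromRows W1' W2' *ᵥ φf) := by
        simp [hw, dotProduct, mul_sub, Finset.sum_sub_distrib]
      rw [step, Matrix.dotProduct_mulVec, Matrix.dotProduct_mulVec, hdl p, sub_self]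
    intro s
    have := congrFun hy0 (e s)
    simpa using this
  have h1 : W1 *ᵥ φf = W1' *ᵥ φf := by
    funext t
    have := hy (Sum.inl t)
    simpa [hw, sub_eq_zero] using this
  have h2 : W2 *ᵥ φf = W2' *ᵥ φf := by
    funext t
    have := hy (Sum.inr t)
    simpa [hw, sub_eq_zero] using this
  have hS : ∀ i : Fin (k - 1),
      (∑ j : Fin (k - 1), T2 i j * x f ^ (j : ℕ)) =
      ∑ j : Fin (k - 1), T2' i j * x f ^ (j : ℕ) := by
    intro i
    have h2i := congrFun h2 i
    simp only [Matrix.mulVec, dotProduct] at h2i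
    have e1 : (∑ j : Fin (d - k + 1), W2 i j * φf j)
        = ∑ j : Fin (k - 1), T2 i j * x f ^ (j : ℕ) := by
      rw [← sum_dite_castLE hkd (fun j : Fin (k - 1) => T2 i j * x f ^ (j : ℕ))]
      apply Finset.sum_congr rfl
      intro j _
      rw [hW2]
      split <;> simp [hφf]
    have e2 : (∑ j : Fin (d - k + 1), W2' i j * φf j)
        = ∑ j : Fin (k - 1), T2' i j * x f ^ (j : ℕ) := by
      rw [← sum_dite_castLE hkd (fun j : Fin (k - 1) => T2' i j * x f ^ (j : ℕ))]
      apply Finset.sum_congr rfl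
      intro j _
      rw [hW2']
      split <;> simp [hφf]
    rw [e1, e2] at h2i
    exact h2i
  rw [Matrix.sumElim_vecMul_fromRows, Matrix.sumElim_vecMul_fromRows]
  have hvW1 : φf ᵥ* W1 = φf ᵥ* W1' := by
    rw [← hW1.eq, ← hW1'.eq, Matrix.vecMul_transpose, Matrix.vecMul_transpose, h1]
  have hvW2 : (fun t : Fin (k - 1) => x f ^ (d - k + 1 + (t : ℕ))) ᵥ* W2 =
      (fun t : Fin (k - 1) => x f ^ (d - k + 1 + (t : ℕ))) ᵥ* W2' := by
    funext j
    simp only [Matrix.vecMul, dotProduct]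
    by_cases hj : (j : ℕ) < k - 1
    · have key : ∀ (T : Matrix (Fin (k - 1)) (Fin (k - 1)) F), T.IsSymm →
          ∀ (W : Matrix (Fin (k - 1)) (Fin (d - k + 1)) F),
          (∀ (i : Fin (k - 1)) (j : Fin (d - k + 1)),
            W i j = if h : (j : ℕ) < k - 1 then T i ⟨j, h⟩ else 0) →
          (∑ i : Fin (k - 1), x f ^ (d - k + 1 + (i : ℕ)) * W i j) =
          x f ^ (d - k + 1) * ∑ i : Fin (k - 1), T ⟨j, hj⟩ i * x f ^ (i : ℕ) := by
        intro T hT W hW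
        rw [Finset.mul_sum]
        apply Finset.sum_congr rfl
        intro i _
        rw [hW, dif_pos hj, ← hT.apply i ⟨(j : ℕ), hj⟩, pow_add]
        ring
      rw [key T2 hT2 W2 hW2, key T2' hT2' W2' hW2', hS ⟨j, hj⟩]
    · have z1 : ∀ i, W2 i j = 0 := fun i => by rw [hW2, dif_neg hj]
      have z2 : ∀ i, W2' i j = 0 := fun i => by rw [hW2', dif_neg hj]
      simp [z1, z2]
  rw [hφf] at hvW1
  rw [hvW1, hvW2]
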